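/- Let m ≥ 0, v ∈ ℝ³ with |v| < 1/2 fixed, and |k| > 0. Then ∫_{S²} dΩ(θ,φ) (|v−w|² + |k|² − 2cos θ |v−w||k| + m²)^{−1/2} ≤ C/|k| for every w ∈ ℝ³, where θ is the angle between k and v−w and C is a universal constant independent of m, v, w. Explicitly: ∫₀^{2π}dφ ∫₀^π dθ sin θ (a² + b² − 2ab cos θ + m²)^{−1/2} ≤ C/b for all a ≥ 0, b > 0, m ≥ 0. -/

import Mathlib

open Real MeasureTheory

/-- **m-independent angular integral estimate.** There is a universal
constant `C` (independent of `a`, `b`, `m`) such that for all `a ≥ 0`, `b > 0`, `m ≥ 0`,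
`∫₀^{2π}dφ ∫₀^π dθ sin θ (a² + b² − 2ab cos θ + m²)^{−1/2} ≤ C/b`. -/
theorem angular_integral_bound :
    ∃ C > (0 : ℝ), ∀ a b m : ℝ, 0 ≤ a → 0 < b → 0 ≤ m →
      (∫ _φ in (0 : ℝ)..(2 * Real.pi),
        ∫ θ in (0 : ℝ)..Real.pi,
          Real.sin θ / Real.sqrt (a ^ 2 + b ^ 2 - 2 * a * b * Real.cos θ + m ^ 2)) ≤
        C / b := by
  refine ⟨4 * Real.pi ^ 2, by positivity, fun a b m ha hb hm => ?_⟩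
  set f : ℝ → ℝ := fun θ =>
    Real.sin θ / Real.sqrt (a ^ 2 + b ^ 2 - 2 * a * b * Real.cos θ + m ^ 2) with hfdef
  have fnonneg : ∀ θ ∈ Set.Icc (0:ℝ) Real.pi, 0 ≤ f θ := by
    intro θ hθ
    exact div_nonneg (Real.sin_nonneg_of_nonneg_of_le_pi hθ.1 hθ.2) (Real.sqrt_nonneg _)
  -- pointwise bound on [0, π]
  have key : ∀ θ ∈ Set.Icc (0:ℝ) Real.pi, f θ ≤ 2 / b := by
    intro θ hθ
    have hs : 0 ≤ Real.sin θ := Real.sin_nonneg_of_nonneg_of_le_pi hθ.1 hθ.2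
    set D := a ^ 2 + b ^ 2 - 2 * a * b * Real.cos θ + m ^ 2 with hD
    by_cases hD0 : Real.sqrt D = 0
    · show Real.sin θ / Real.sqrt D ≤ 2 / b
      rw [hD0, div_zero]
      positivity
    have hDpos : 0 < Real.sqrt D := lt_of_le_of_ne (Real.sqrt_nonneg _) (Ne.symm hD0)
    show Real.sin θ / Real.sqrt D ≤ 2 / b
    rw [div_le_div_iff₀ hDpos hb]
    have hc1 : Real.cos θ ≤ 1 := Real.cos_le_one θ
    by_cases hc : Real.cos θ ≤ 1/2
    · -- D ≥ b²/4, so √D ≥ b/2, and sin θ ≤ 1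
      have hDge : b ^ 2 * (1/4) ≤ D := by
        rw [hD]
        nlinarith [sq_nonneg (a - b/2), sq_nonneg m,
          mul_nonneg (mul_nonneg ha hb.le) (by linarith : (0:ℝ) ≤ 1/2 - Real.cos θ)]
      have h2 : Real.sqrt (b ^ 2 * (1/4)) = b / 2 := by
        rw [show b ^ 2 * (1/4) = (b/2)^2 by ring, Real.sqrt_sq (by positivity)]
      have h1 : b / 2 ≤ Real.sqrt D := h2 ▸ Real.sqrt_le_sqrt hDge
      nlinarith [Real.sin_le_one θ]
    · push_neg at hc
      have hcnn : 0 ≤ Real.cos θ := by linarith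
      have hDnn : (0:ℝ) ≤ D := by
        rw [hD]
        nlinarith [sq_nonneg (a - b * Real.cos θ), sq_nonneg m,
          mul_nonneg (mul_nonneg (sq_nonneg b) (by linarith : (0:ℝ) ≤ 1 - Real.cos θ))
            (by linarith [Real.neg_one_le_cos θ] : (0:ℝ) ≤ 1 + Real.cos θ)]
      have hDge : b ^ 2 * (1 - Real.cos θ) ≤ D := by
        rw [hD]
        nlinarith [sq_nonneg (a - b * Real.cos θ), sq_nonneg m,
          mul_nonneg (mul_nonneg (sq_nonneg b) hcnn) (by linarith : (0:ℝ) ≤ 1 - Real.cos θ)]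
      have hs2 : Real.sin θ ^ 2 ≤ 2 * (1 - Real.cos θ) := by
        nlinarith [Real.sin_sq_add_cos_sq θ]
      have hsq : Real.sqrt D ^ 2 = D := Real.sq_sqrt hDnn
      have hsb : 0 ≤ Real.sin θ * b := mul_nonneg hs hb.le
      have h2D : 0 ≤ 2 * Real.sqrt D := by positivity
      have hsqle : (Real.sin θ * b) ^ 2 ≤ (2 * Real.sqrt D) ^ 2 := by nlinarith
      nlinarith [hsqle, hsb, h2D]
  -- measurability and integrability of f
  have hmeas : Measurable f := by
    apply Real.measurable_sin.div
    exact (Real.continuous_sqrt.comp (by continuity)).measurable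
  have hint : IntervalIntegrable f volume 0 Real.pi := by
    rw [intervalIntegrable_iff_integrableOn_Ioc_of_le Real.pi_pos.le]
    apply MeasureTheory.Integrable.mono'
      (integrableOn_const (C := (2/b : ℝ)) measure_Ioc_lt_top.ne) hmeas.aestronglyMeasurable
    · filter_upwards [ae_restrict_mem measurableSet_Ioc] with θ hθ
      have hmem : θ ∈ Set.Icc (0:ℝ) Real.pi := ⟨hθ.1.le, hθ.2⟩
      rw [Real.norm_eq_abs, abs_of_nonneg (fnonneg θ hmem)]
      exact key θ hmem
  -- inner integral bound
  have hinner : (∫ θ in (0:ℝ)..Real.pi, f θ) ≤ 2 * Real.pi / b := by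
    have h1 : (∫ θ in (0:ℝ)..Real.pi, f θ) ≤ ∫ _θ in (0:ℝ)..Real.pi, (2/b : ℝ) :=
      intervalIntegral.integral_mono_on Real.pi_pos.le hint intervalIntegrable_const key
    rw [intervalIntegral.integral_const, smul_eq_mul] at h1
    calc (∫ θ in (0:ℝ)..Real.pi, f θ) ≤ (Real.pi - 0) * (2/b) := h1
      _ = 2 * Real.pi / b := by ring
  -- outer integral: integrand constant in φ
  rw [intervalIntegral.integral_const, smul_eq_mul]
  have h2pi : (0:ℝ) ≤ 2 * Real.pi - 0 := by linarith [Real.pi_pos]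
  calc (2 * Real.pi - 0) * (∫ θ in (0:ℝ)..Real.pi, f θ)
      ≤ (2 * Real.pi - 0) * (2 * Real.pi / b) := by
        exact mul_le_mul_of_nonneg_left hinner h2pi
    _ = 4 * Real.pi ^ 2 / b := by ring
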